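/- arXiv:2507.21623 — 2 statements merged into one kernel-verified Lean document; each statement's English description precedes it below -/
import Mathlib

section
/- Let F_q be a finite field and G a finite group with gcd(|G|, q) = 1. For an irreducible representation ρ of G over the algebraic closure of F_q, with d = dim ρ and s(ρ) the size of the orbit of (the isomorphism class of) ρ under the Frobenius action σ∘ρ, the two-sided ideal of F_q[G] generated by e[ρ] = Σ_{ρ'∈[ρ]} e(ρ') has F_q-dimension s(ρ)·d². -/
open scoped BigOperators

namespace GroupCodeHulls

variable {K : Type*} [Field K] {G : Type*} [Group G]

/-- A (matrix) representation of `G` over `K` of degree `d`. -/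
abbrev MatRep (K : Type*) [Field K] (G : Type*) [Group G] (d : ℕ) : Type _ :=
  G →* (Matrix (Fin d) (Fin d) K)ˣ

/-- A subspace `W ⊆ K^d` is invariant under the representation `ρ`. -/
def IsInvariant {d : ℕ} (ρ : MatRep K G d) (W : Submodule K (Fin d → K)) : Prop :=
  ∀ g : G, ∀ x ∈ W, (ρ g : Matrix (Fin d) (Fin d) K).mulVec x ∈ W

/-- `ρ` is an irreducible representation. -/
def IsIrreducible {d : ℕ} (ρ : MatRep K G d) : Prop :=
  0 < d ∧ ∀ W : Submodule K (Fin d → K), IsInvariant ρ W → W = ⊥ ∨ W = ⊤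

/-- Two representations are isomorphic. -/
def IsoRep {d₁ d₂ : ℕ} (ρ₁ : MatRep K G d₁) (ρ₂ : MatRep K G d₂) : Prop :=
  ∃ T : (Fin d₁ → K) ≃ₗ[K] (Fin d₂ → K),
    ∀ (g : G) (x : Fin d₁ → K),
      T ((ρ₁ g : Matrix (Fin d₁) (Fin d₁) K).mulVec x)
        = (ρ₂ g : Matrix (Fin d₂) (Fin d₂) K).mulVec (T x)

/-- The character of a representation. -/
noncomputable def charOf {d : ℕ} (ρ : MatRep K G d) (g : G) : K :=
  Matrix.trace (ρ g : Matrix (Fin d) (Fin d) K)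

/-- The element `e(ρ) = (d/|G|) ∑_g χ_ρ(g⁻¹) g` of the group algebra. -/
noncomputable def repIdem [Fintype G] {d : ℕ} (ρ : MatRep K G d) : MonoidAlgebra K G :=
  ∑ g : G, MonoidAlgebra.single g ((d : K) * (Fintype.card G : K)⁻¹ * charOf ρ g⁻¹)

/-- The "transpose-inverse" of an invertible matrix, as a unit. -/
def contraUnit {n : Type*} [Fintype n] [DecidableEq n] (u : (Matrix n n K)ˣ) :
    (Matrix n n K)ˣ where
  val := Matrix.transpose (↑u⁻¹ : Matrix n n K)
  inv := Matrix.transpose (↑u : Matrix n n K)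
  val_inv := by
    rw [← Matrix.transpose_mul, ← Units.val_mul, mul_inv_cancel, Units.val_one,
      Matrix.transpose_one]
  inv_val := by
    rw [← Matrix.transpose_mul, ← Units.val_mul, inv_mul_cancel, Units.val_one,
      Matrix.transpose_one]

/-- The contragredient representation `g ↦ ᵀρ(g)⁻¹`. -/
def contra {d : ℕ} (ρ : MatRep K G d) : MatRep K G d where
  toFun g := contraUnit (ρ g)
  map_one' := by
    ext
    simp [contraUnit]
  map_mul' g h := by
    ext
    simp [contraUnit, mul_inv_rev, Matrix.transpose_mul]

/-- The Galois twist `σ ∘ ρ` of a representation. -/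
def galConj {k : Type*} [Field k] [Algebra k K] (σ : K ≃ₐ[k] K) {d : ℕ}
    (ρ : MatRep K G d) : MatRep K G d :=
  (Units.map (AlgEquiv.mapMatrix σ :
      Matrix (Fin d) (Fin d) K ≃ₐ[k] Matrix (Fin d) (Fin d) K)) |>.comp ρ

/-- `ρ₂` lies in the Galois orbit of (the isomorphism class of) `ρ₁`. -/
def SameOrbit (k : Type*) [Field k] [Algebra k K] {d₁ d₂ : ℕ}
    (ρ₁ : MatRep K G d₁) (ρ₂ : MatRep K G d₂) : Prop :=
  ∃ σ : K ≃ₐ[k] K, IsoRep (galConj σ ρ₁) ρ₂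

/-- `τ 0, …, τ (s-1)` is a complete irredundant system of representatives of
the Galois orbit `[ρ]`; in particular `s = s(ρ)` is the size of the orbit. -/
def OrbitEnum (k : Type*) [Field k] [Algebra k K] {d : ℕ} (ρ : MatRep K G d)
    (s : ℕ) (τ : Fin s → MatRep K G d) : Prop :=
  (∀ i, SameOrbit k ρ (τ i)) ∧
  (∀ i j, i ≠ j → ¬ IsoRep (τ i) (τ j)) ∧
  (∀ σ : K ≃ₐ[k] K, ∃ i, IsoRep (galConj σ ρ) (τ i))

/-- The star operation `(∑ f(g) g)* = ∑ f(g⁻¹) g` on the group algebra. -/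
def starG (z : MonoidAlgebra K G) : MonoidAlgebra K G :=
  MonoidAlgebra.ofCoeff (Finsupp.equivMapDomain (Equiv.inv G) z.coeff)

/-- The Euclidean inner product on the group algebra with basis `G`. -/
noncomputable def eform [Fintype G] (u v : MonoidAlgebra K G) : K :=
  ∑ g : G, u.coeff g * v.coeff g

/-- The underlying `K`-subspace of a two-sided ideal of `K[G]`. -/
def codeSub (C : TwoSidedIdeal (MonoidAlgebra K G)) :
    Submodule K (MonoidAlgebra K G) where
  carrier := C
  add_mem' := C.add_mem
  zero_mem' := C.zero_mem
  smul_mem' c x hx := by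
    have h : (c • x : MonoidAlgebra K G) = algebraMap K (MonoidAlgebra K G) c * x :=
      Algebra.smul_def c x
    simpa [h] using C.mul_mem_left (algebraMap K (MonoidAlgebra K G) c) x hx

/-- The dual code of a two-sided ideal of `K[G]`, as a `K`-subspace. -/
noncomputable def dualSub [Fintype G] (C : TwoSidedIdeal (MonoidAlgebra K G)) :
    Submodule K (MonoidAlgebra K G) where
  carrier := {v | ∀ u ∈ C, eform v u = 0}
  add_mem' := by
    intro a b ha hb u hu
    simp only [Set.mem_setOf_eq] at ha hb ⊢
    have h : eform (a + b) u = eform a u + eform b u := by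
      unfold eform
      rw [← Finset.sum_add_distrib]
      exact Finset.sum_congr rfl fun g _ => by rw [MonoidAlgebra.coeff_add, Finsupp.add_apply, add_mul]
    rw [h, ha u hu, hb u hu, add_zero]
  zero_mem' := by
    intro u hu
    simp [eform]
  smul_mem' := by
    intro c x hx u hu
    simp only [Set.mem_setOf_eq] at hx ⊢
    have h : eform (c • x) u = c * eform x u := by
      unfold eform
      rw [Finset.mul_sum]
      exact Finset.sum_congr rfl fun g _ => by
        rw [MonoidAlgebra.coeff_smul, Finsupp.smul_apply, smul_eq_mul, mul_assoc]
    rw [h, hx u hu, mul_zero]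

/-- The hull `h(C) = C ∩ C^⊥` of a group code. -/
noncomputable def hullSub [Fintype G] (C : TwoSidedIdeal (MonoidAlgebra K G)) :
    Submodule K (MonoidAlgebra K G) :=
  codeSub C ⊓ dualSub C

/-- The dimension of the hull of a group code. -/
noncomputable def hullDim [Fintype G] (C : TwoSidedIdeal (MonoidAlgebra K G)) : ℕ :=
  Module.finrank K ↥(hullSub C)

section Aux

open Matrix

variable {K : Type*} [Field K] {G : Type*} [Group G]

/-- The matrix of `ρ g`. -/
abbrev Umat {d : ℕ} (ρ : MatRep K G d) (g : G) : Matrix (Fin d) (Fin d) K :=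
  (ρ g : Matrix (Fin d) (Fin d) K)

lemma Umat_mul {d : ℕ} (ρ : MatRep K G d) (a b : G) :
    Umat ρ (a * b) = Umat ρ a * Umat ρ b := by
  show ((ρ (a * b) : (Matrix (Fin d) (Fin d) K)ˣ) : Matrix (Fin d) (Fin d) K) = _
  rw [MonoidHom.map_mul, Units.val_mul]

lemma Umat_one {d : ℕ} (ρ : MatRep K G d) : Umat ρ 1 = 1 := by
  simp [Umat]

lemma Umat_mul_inv {d : ℕ} (ρ : MatRep K G d) (a : G) :
    Umat ρ a * Umat ρ a⁻¹ = 1 := by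
  rw [← Umat_mul, mul_inv_cancel, Umat_one]

lemma Umat_inv_mul {d : ℕ} (ρ : MatRep K G d) (a : G) :
    Umat ρ a⁻¹ * Umat ρ a = 1 := by
  rw [← Umat_mul, inv_mul_cancel, Umat_one]

lemma charOf_eq_trace {d : ℕ} (ρ : MatRep K G d) (g : G) :
    charOf ρ g = (Umat ρ g).trace := rfl

/-- Fintype version of `MonoidAlgebra.mul_apply_left`. -/
lemma mul_apply_fin [Fintype G] (f g : MonoidAlgebra K G) (x : G) :
    (f * g).coeff x = ∑ h : G, f.coeff h * g.coeff (h⁻¹ * x) := by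
  rw [MonoidAlgebra.coeff_mul_apply_left]
  exact Finsupp.sum_fintype _ _ fun h => by simp

/-- The Fourier transform attached to a representation. -/
noncomputable def fourier [Fintype G] {d : ℕ} (ρ : MatRep K G d) :
    MonoidAlgebra K G →ₐ[K] Matrix (Fin d) (Fin d) K :=
  MonoidAlgebra.lift K (Matrix (Fin d) (Fin d) K) G ((Units.coeHom _).comp ρ)

lemma fourier_single [Fintype G] {d : ℕ} (ρ : MatRep K G d) (g : G) (c : K) :
    fourier ρ (MonoidAlgebra.single g c) = c • Umat ρ g := by
  simp [fourier, MonoidAlgebra.lift_single, Umat]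

lemma fourier_apply [Fintype G] {d : ℕ} (ρ : MatRep K G d) (x : MonoidAlgebra K G) :
    fourier ρ x = ∑ g : G, x.coeff g • Umat ρ g := by
  have hx : x = ∑ g : G, MonoidAlgebra.single g (x.coeff g) := by
    apply MonoidAlgebra.ext
    simp only [MonoidAlgebra.coeff_sum, MonoidAlgebra.coeff_single, Finsupp.univ_sum_single]
  conv_lhs => rw [hx]
  rw [map_sum]
  exact Finset.sum_congr rfl fun g _ => fourier_single ρ g (x.coeff g)

lemma sum_conj_comm [Fintype G] {d : ℕ} (ρ₁ ρ₂ : MatRep K G d)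
    (A : Matrix (Fin d) (Fin d) K) (h : G) :
    Umat ρ₁ h * (∑ g : G, Umat ρ₁ g⁻¹ * A * Umat ρ₂ g)
      = (∑ g : G, Umat ρ₁ g⁻¹ * A * Umat ρ₂ g) * Umat ρ₂ h := by
  rw [Finset.mul_sum, Finset.sum_mul]
  refine Fintype.sum_equiv (Equiv.mulRight h⁻¹) _ _ fun x => ?_
  simp only [Equiv.coe_mulRight]
  have h1 : Umat ρ₁ (x * h⁻¹)⁻¹ = Umat ρ₁ h * Umat ρ₁ x⁻¹ := by
    rw [← Umat_mul]; congr 1; group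
  have h2 : Umat ρ₂ (x * h⁻¹) * Umat ρ₂ h = Umat ρ₂ x := by
    rw [← Umat_mul]; congr 1; group
  rw [h1, mul_assoc (Umat ρ₁ h * Umat ρ₁ x⁻¹ * A), h2]
  simp only [mul_assoc]

lemma intertwiner_eq_zero [Fintype G] {d : ℕ} {ρ₁ ρ₂ : MatRep K G d}
    (h₂ : IsIrreducible ρ₂) (hni : ¬ IsoRep ρ₂ ρ₁)
    (S : Matrix (Fin d) (Fin d) K)
    (hS : ∀ g : G, Umat ρ₁ g * S = S * Umat ρ₂ g) : S = 0 := by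
  by_contra hS0
  have hker : IsInvariant ρ₂ (LinearMap.ker S.mulVecLin) := by
    intro g x hx
    rw [LinearMap.mem_ker] at hx ⊢
    show S.mulVec ((ρ₂ g : Matrix (Fin d) (Fin d) K).mulVec x) = 0
    rw [Matrix.mulVec_mulVec, ← hS, ← Matrix.mulVec_mulVec]
    rw [Matrix.mulVecLin_apply] at hx
    rw [hx, Matrix.mulVec_zero]
  rcases h₂.2 _ hker with hbot | htop
  · have hinj : Function.Injective S.mulVecLin := by
      rwa [← LinearMap.ker_eq_bot]
    have hsurj := LinearMap.injective_iff_surjective.1 hinj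
    refine hni ⟨LinearEquiv.ofBijective S.mulVecLin ⟨hinj, hsurj⟩, fun g x => ?_⟩
    show S.mulVec ((ρ₂ g : Matrix (Fin d) (Fin d) K).mulVec x)
        = (ρ₁ g : Matrix (Fin d) (Fin d) K).mulVec (S.mulVec x)
    rw [Matrix.mulVec_mulVec, ← hS, Matrix.mulVec_mulVec]
  · apply hS0
    ext i j
    have hj : (Pi.single j 1 : Fin d → K) ∈ LinearMap.ker S.mulVecLin :=
      htop ▸ Submodule.mem_top
    rw [LinearMap.mem_ker, Matrix.mulVecLin_apply] at hj
    have := congrFun hj i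
    simpa [Matrix.mulVec_single] using this

lemma commutant_scalar [Fintype G] [IsAlgClosed K] {d : ℕ} {ρ : MatRep K G d}
    (h : IsIrreducible ρ) (S : Matrix (Fin d) (Fin d) K)
    (hS : ∀ g : G, Umat ρ g * S = S * Umat ρ g) : ∃ c : K, S = c • 1 := by
  haveI : Nonempty (Fin d) := ⟨⟨0, h.1⟩⟩
  obtain ⟨c, hc⟩ := Module.End.exists_eigenvalue S.mulVecLin
  obtain ⟨v, hv1, hv2⟩ := hc.exists_hasEigenvector
  refine ⟨c, ?_⟩
  have hker : IsInvariant ρ (LinearMap.ker (S.mulVecLin - c • LinearMap.id)) := by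
    intro g x hx
    rw [LinearMap.mem_ker] at hx ⊢
    simp only [LinearMap.sub_apply, LinearMap.smul_apply, LinearMap.id_apply,
      Matrix.mulVecLin_apply, sub_eq_zero] at hx ⊢
    rw [Matrix.mulVec_mulVec, ← hS g, ← Matrix.mulVec_mulVec, hx, Matrix.mulVec_smul]
  rcases h.2 _ hker with hbot | htop
  · exfalso
    have hv : v ∈ LinearMap.ker (S.mulVecLin - c • LinearMap.id) := by
      rw [LinearMap.mem_ker]
      simp only [LinearMap.sub_apply, LinearMap.smul_apply, LinearMap.id_apply, sub_eq_zero]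
      exact Module.End.mem_eigenspace_iff.1 hv1
    rw [hbot] at hv
    exact hv2 (by simpa using hv)
  · ext i j
    have hj : (Pi.single j 1 : Fin d → K) ∈ LinearMap.ker (S.mulVecLin - c • LinearMap.id) :=
      htop ▸ Submodule.mem_top
    rw [LinearMap.mem_ker] at hj
    simp only [LinearMap.sub_apply, LinearMap.smul_apply, LinearMap.id_apply,
      Matrix.mulVecLin_apply, sub_eq_zero] at hj
    have := congrFun hj i
    simp only [Matrix.mulVec_single, mul_one, Pi.smul_apply, Pi.single_apply,
      smul_eq_mul, op_smul_eq_mul, Matrix.col_apply] at this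
    rw [this]
    simp [Matrix.one_apply, Pi.single_apply, mul_comm]

end Aux

section Aux2

open Matrix

variable {K : Type*} [Field K] {G : Type*} [Group G] [Fintype G]

lemma mul_stdBasis_mul_apply {d : ℕ} (X Y : Matrix (Fin d) (Fin d) K) (a b c e : Fin d) :
    (X * Matrix.single b c (1 : K) * Y) a e = X a b * Y c e := by
  rw [Matrix.mul_apply]
  rw [Finset.sum_eq_single c]
  · rw [Matrix.mul_single_apply_same, mul_one]
  · intro q _ hq
    rw [Matrix.mul_single_apply_of_ne _ _ _ _ _ hq, zero_mul]
  · intro habs; exact absurd (Finset.mem_univ c) habs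

lemma sum_conj_eq [IsAlgClosed K] {d : ℕ} {ρ : MatRep K G d} (h : IsIrreducible ρ)
    (A : Matrix (Fin d) (Fin d) K) :
    ∃ c : K, (∑ g : G, Umat ρ g⁻¹ * A * Umat ρ g) = c • 1 ∧
      (d : K) * c = (Fintype.card G : K) * A.trace := by
  obtain ⟨c, hc⟩ := commutant_scalar h (∑ g : G, Umat ρ g⁻¹ * A * Umat ρ g)
      (fun g => sum_conj_comm ρ ρ A g)
  refine ⟨c, hc, ?_⟩
  have h1 : (∑ g : G, Umat ρ g⁻¹ * A * Umat ρ g).trace = (Fintype.card G : K) * A.trace := by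
    rw [Matrix.trace_sum]
    rw [Finset.sum_congr rfl fun (g : G) _ => by
      rw [Matrix.trace_mul_cycle, Umat_mul_inv, Matrix.one_mul]]
    rw [Finset.sum_const, Finset.card_univ, nsmul_eq_mul]
  rw [hc, Matrix.trace_smul, Matrix.trace_one, Fintype.card_fin, smul_eq_mul] at h1
  rw [← h1]; ring

lemma dK_ne_zero [IsAlgClosed K] {d : ℕ} {ρ : MatRep K G d} (h : IsIrreducible ρ)
    (hG : (Fintype.card G : K) ≠ 0) : (d : K) ≠ 0 := by
  obtain ⟨c, -, htr⟩ := sum_conj_eq h (Matrix.single ⟨0, h.1⟩ ⟨0, h.1⟩ (1 : K))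
  intro hd
  rw [hd, zero_mul] at htr
  have htrace : (Matrix.single (⟨0, h.1⟩ : Fin d) ⟨0, h.1⟩ (1 : K)).trace = 1 := by
    rw [Matrix.trace]
    rw [Finset.sum_eq_single (⟨0, h.1⟩ : Fin d)]
    · simp [Matrix.diag, Matrix.single]
    · intro q _ hq; simp [Matrix.diag, Matrix.single, Ne.symm hq]
    · intro habs; exact absurd (Finset.mem_univ _) habs
  rw [htrace, mul_one] at htr
  exact hG htr.symm

lemma sum_entry_same [IsAlgClosed K] {d : ℕ} {ρ : MatRep K G d} (h : IsIrreducible ρ)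
    (hG : (Fintype.card G : K) ≠ 0) (a b c e : Fin d) :
    ∑ g : G, Umat ρ g⁻¹ a b * Umat ρ g c e
      = (if b = c then 1 else 0) * (if a = e then 1 else 0)
          * ((Fintype.card G : K) * (d : K)⁻¹) := by
  have hd := dK_ne_zero h hG
  obtain ⟨μ, hT, htr⟩ := sum_conj_eq h (Matrix.single b c (1 : K))
  have htrE : (Matrix.single b c (1 : K)).trace = if b = c then 1 else 0 := by
    rcases eq_or_ne b c with rfl | hbc
    · rw [if_pos rfl, Matrix.trace]
      rw [Finset.sum_eq_single b]
      · simp [Matrix.diag, Matrix.single]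
      · intro q _ hq; simp [Matrix.diag, Matrix.single, Ne.symm hq]
      · intro habs; exact absurd (Finset.mem_univ _) habs
    · rw [if_neg hbc, Matrix.trace]
      apply Finset.sum_eq_zero
      intro q _
      simp only [Matrix.diag, Matrix.single, Matrix.of_apply]
      rw [if_neg]
      rintro ⟨rfl, rfl⟩; exact hbc rfl
  have hμ : μ = (if b = c then 1 else 0) * ((Fintype.card G : K) * (d : K)⁻¹) := by
    have hstep : μ = (d : K)⁻¹ * ((d : K) * μ) := by
      rw [← mul_assoc, inv_mul_cancel₀ hd, one_mul]
    rw [hstep, htr, htrE]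
    rcases eq_or_ne b c with rfl | hbc
    · simp [mul_comm]
    · simp [hbc]
  have hentry := congrArg (fun M : Matrix (Fin d) (Fin d) K => M a e) hT
  simp only [Matrix.sum_apply] at hentry
  rw [Finset.sum_congr rfl fun (g : G) _ => mul_stdBasis_mul_apply (Umat ρ g⁻¹) (Umat ρ g) a b c e]
    at hentry
  rw [hentry, hμ]
  rw [Matrix.smul_apply, Matrix.one_apply, smul_eq_mul]
  rcases eq_or_ne a e with rfl | hae
  · simp
  · simp [hae]

lemma sum_entry_mix {d : ℕ} {ρ₁ ρ₂ : MatRep K G d} (h₂ : IsIrreducible ρ₂)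
    (hni : ¬ IsoRep ρ₂ ρ₁) (a b c e : Fin d) :
    ∑ g : G, Umat ρ₁ g⁻¹ a b * Umat ρ₂ g c e = 0 := by
  have hS : (∑ g : G, Umat ρ₁ g⁻¹ * Matrix.single b c (1 : K) * Umat ρ₂ g) = 0 :=
    intertwiner_eq_zero h₂ hni _ (fun g => sum_conj_comm ρ₁ ρ₂ _ g)
  have hentry := congrArg (fun M : Matrix (Fin d) (Fin d) K => M a e) hS
  simp only [Matrix.sum_apply, Matrix.zero_apply] at hentry
  rw [Finset.sum_congr rfl fun (g : G) _ =>
    mul_stdBasis_mul_apply (Umat ρ₁ g⁻¹) (Umat ρ₂ g) a b c e] at hentry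
  exact hentry

lemma repIdem_apply {d : ℕ} (ρ : MatRep K G d) (h : G) :
    (repIdem ρ).coeff h = (d : K) * (Fintype.card G : K)⁻¹ * charOf ρ h⁻¹ := by
  classical
  rw [repIdem, MonoidAlgebra.coeff_sum, Finsupp.finset_sum_apply]
  rw [Finset.sum_eq_single h]
  · rw [MonoidAlgebra.coeff_single_apply, if_pos rfl]
  · intro q _ hq; rw [MonoidAlgebra.coeff_single_apply, if_neg hq]
  · intro habs; exact absurd (Finset.mem_univ _) habs

lemma repIdem_conj {d : ℕ} (ρ : MatRep K G d) (a b : G) :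
    (repIdem ρ).coeff (a * b) = (repIdem ρ).coeff (b * a) := by
  rw [repIdem_apply, repIdem_apply]
  congr 1
  rw [charOf_eq_trace, charOf_eq_trace, show (a * b)⁻¹ = b⁻¹ * a⁻¹ from mul_inv_rev a b,
    show (b * a)⁻¹ = a⁻¹ * b⁻¹ from mul_inv_rev b a, Umat_mul, Umat_mul,
    Matrix.trace_mul_comm]

lemma fourier_repIdem_same [IsAlgClosed K] {d : ℕ} {ρ : MatRep K G d} (h : IsIrreducible ρ)
    (hG : (Fintype.card G : K) ≠ 0) : fourier ρ (repIdem ρ) = 1 := by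
  have hd := dK_ne_zero h hG
  rw [fourier_apply]
  ext c e
  rw [Matrix.sum_apply, Matrix.one_apply]
  have step : ∀ g : G, ((repIdem ρ).coeff g • Umat ρ g) c e
      = ∑ k : Fin d, (d : K) * (Fintype.card G : K)⁻¹ * (Umat ρ g⁻¹ k k * Umat ρ g c e) := by
    intro g
    simp only [Matrix.smul_apply, repIdem_apply, charOf_eq_trace, Matrix.trace, Matrix.diag,
      smul_eq_mul, Finset.sum_mul, Finset.mul_sum]
    exact Finset.sum_congr rfl fun k _ => by ring
  rw [Finset.sum_congr rfl fun (g : G) _ => step g, Finset.sum_comm]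
  rw [Finset.sum_congr rfl fun (k : Fin d) _ => (Finset.mul_sum _ _ _).symm]
  rw [Finset.sum_congr rfl fun (k : Fin d) _ => by rw [sum_entry_same h hG k k c e]]
  rcases eq_or_ne c e with rfl | hce
  · rw [if_pos rfl]
    rw [Finset.sum_congr rfl fun (k : Fin d) _ => by
      rw [show (if (k : Fin d) = c then (1:K) else 0) * (if k = c then (1:K) else 0)
        = if k = c then (1:K) else 0 by rcases eq_or_ne k c with rfl | hkc
                                        · simp
                                        · simp [hkc]]]
    rw [← Finset.mul_sum]
    rw [Finset.sum_congr rfl fun (i : Fin d) _ =>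
      show (if i = c then (1:K) else 0) * ((Fintype.card G : K) * (d : K)⁻¹)
          = if i = c then ((Fintype.card G : K) * (d : K)⁻¹) else 0 from by
        rcases eq_or_ne i c with rfl | hic
        · simp
        · simp [hic]]
    rw [Finset.sum_ite_eq' Finset.univ c (fun _ => ((Fintype.card G : K) * (d : K)⁻¹))]
    rw [if_pos (Finset.mem_univ c)]
    field_simp
  · rw [if_neg hce]
    apply Finset.sum_eq_zero
    intro k _
    rcases eq_or_ne k c with rfl | hkc
    · rw [if_neg hce]; ring
    · rw [if_neg hkc]; ring

lemma fourier_repIdem_mix {d : ℕ} {ρ₁ ρ₂ : MatRep K G d} (h₂ : IsIrreducible ρ₂)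
    (hni : ¬ IsoRep ρ₂ ρ₁) : fourier ρ₂ (repIdem ρ₁) = 0 := by
  rw [fourier_apply]
  ext c e
  rw [Matrix.sum_apply, Matrix.zero_apply]
  have step : ∀ g : G, ((repIdem ρ₁).coeff g • Umat ρ₂ g) c e
      = ∑ k : Fin d, (d : K) * (Fintype.card G : K)⁻¹ * (Umat ρ₁ g⁻¹ k k * Umat ρ₂ g c e) := by
    intro g
    simp only [Matrix.smul_apply, repIdem_apply, charOf_eq_trace, Matrix.trace, Matrix.diag,
      smul_eq_mul, Finset.sum_mul, Finset.mul_sum]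
    exact Finset.sum_congr rfl fun k _ => by ring
  rw [Finset.sum_congr rfl fun (g : G) _ => step g, Finset.sum_comm]
  apply Finset.sum_eq_zero
  intro k _
  rw [← Finset.mul_sum, sum_entry_mix h₂ hni k k c e, mul_zero]

/-- The element `∑_g (ρ(g⁻¹))_{b a} · g` of the group algebra. -/
noncomputable def fvec {d : ℕ} (ρ : MatRep K G d) (a b : Fin d) : MonoidAlgebra K G :=
  ∑ g : G, MonoidAlgebra.single g (Umat ρ g⁻¹ b a)

lemma fourier_fvec_same [IsAlgClosed K] {d : ℕ} {ρ : MatRep K G d} (h : IsIrreducible ρ)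
    (hG : (Fintype.card G : K) ≠ 0) (a b : Fin d) :
    fourier ρ (fvec ρ a b)
      = Matrix.single a b ((Fintype.card G : K) * (d : K)⁻¹) := by
  rw [fvec, map_sum]
  ext c e
  rw [Matrix.sum_apply]
  rw [Finset.sum_congr rfl fun (g : G) _ => by
    rw [fourier_single, Matrix.smul_apply, smul_eq_mul]]
  rw [sum_entry_same h hG b a c e]
  simp only [Matrix.single, Matrix.of_apply]
  rcases eq_or_ne a c with rfl | hac
  · rcases eq_or_ne b e with rfl | hbe
    · simp
    · simp [hbe]
  · rcases eq_or_ne b e with rfl | hbe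
    · simp [hac, fun hh => hac hh]
    · simp [hac, hbe]

lemma fourier_fvec_mix {d : ℕ} {ρ₁ ρ₂ : MatRep K G d} (h₂ : IsIrreducible ρ₂)
    (hni : ¬ IsoRep ρ₂ ρ₁) (a b : Fin d) :
    fourier ρ₂ (fvec ρ₁ a b) = 0 := by
  rw [fvec, map_sum]
  ext c e
  rw [Matrix.sum_apply, Matrix.zero_apply]
  rw [Finset.sum_congr rfl fun (g : G) _ => by
    rw [fourier_single, Matrix.smul_apply, smul_eq_mul]]
  exact sum_entry_mix h₂ hni b a c e

lemma repIdem_mul_apply {d : ℕ} (ρ : MatRep K G d) (x : MonoidAlgebra K G) (g : G) :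
    (repIdem ρ * x).coeff g
      = (d : K) * (Fintype.card G : K)⁻¹ * (fourier ρ x * Umat ρ g⁻¹).trace := by
  rw [mul_apply_fin]
  rw [Finset.sum_congr rfl fun (h : G) _ => show (repIdem ρ).coeff h * x.coeff (h⁻¹ * g)
      = (d : K) * (Fintype.card G : K)⁻¹ * (x.coeff (h⁻¹ * g) * (Umat ρ h⁻¹).trace) from by
    rw [repIdem_apply, charOf_eq_trace]; ring]
  rw [← Finset.mul_sum]
  congr 1
  rw [fourier_apply, Finset.sum_mul, Matrix.trace_sum]
  refine Fintype.sum_equiv ((Equiv.inv G).trans (Equiv.mulRight g)) _ _ fun h => ?_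
  simp only [Equiv.trans_apply, Equiv.inv_apply, Equiv.coe_mulRight]
  rw [Matrix.smul_mul, Matrix.trace_smul, smul_eq_mul]
  congr 1
  rw [← Umat_mul]
  congr 1
  group

lemma repIdem_mul_eq_zero {d : ℕ} (ρ : MatRep K G d) (x : MonoidAlgebra K G)
    (hx : fourier ρ x = 0) : repIdem ρ * x = 0 := by
  apply MonoidAlgebra.ext
  apply Finsupp.ext
  intro g
  rw [repIdem_mul_apply, hx, Matrix.zero_mul, Matrix.trace_zero, mul_zero]
  rfl

end Aux2

section Aux3

open Matrix

variable {K : Type*} [Field K] {G : Type*} [Group G]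

lemma irreducible_of_iso [Fintype G] {d : ℕ} {ρ₁ ρ₂ : MatRep K G d} (hiso : IsoRep ρ₁ ρ₂)
    (h : IsIrreducible ρ₁) : IsIrreducible ρ₂ := by
  obtain ⟨T, hT⟩ := hiso
  refine ⟨h.1, fun W hW => ?_⟩
  have hW' : IsInvariant ρ₁ (W.map (T.symm : (Fin d → K) →ₗ[K] (Fin d → K))) := by
    intro g x hx
    obtain ⟨w, hw, rfl⟩ := hx
    refine ⟨(ρ₂ g : Matrix (Fin d) (Fin d) K).mulVec w, hW g w hw, ?_⟩
    show T.symm ((ρ₂ g : Matrix (Fin d) (Fin d) K).mulVec w)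
        = (ρ₁ g : Matrix (Fin d) (Fin d) K).mulVec (T.symm w)
    apply T.injective
    rw [T.apply_symm_apply, hT g (T.symm w), T.apply_symm_apply]
  rcases h.2 _ hW' with hbot | htop
  · left
    rw [Submodule.eq_bot_iff] at hbot ⊢
    intro x hx
    have hmem : T.symm x ∈ W.map (T.symm : (Fin d → K) →ₗ[K] (Fin d → K)) := ⟨x, hx, rfl⟩
    have h0 := hbot _ hmem
    have : x = T (T.symm x) := (T.apply_symm_apply x).symm
    rw [this, h0, map_zero]
  · right
    rw [Submodule.eq_top_iff'] at htop ⊢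
    intro x
    obtain ⟨w, hw, hwx⟩ := htop (T.symm x)
    have hco : (T.symm : (Fin d → K) →ₗ[K] (Fin d → K)) w = T.symm w := rfl
    rw [hco] at hwx
    have hTx := congrArg T hwx
    rw [T.apply_symm_apply, T.apply_symm_apply] at hTx
    rwa [← hTx]

lemma irreducible_galConj {k : Type*} [Field k] [Algebra k K] (σ : K ≃ₐ[k] K) {d : ℕ}
    {ρ : MatRep K G d} (h : IsIrreducible ρ) : IsIrreducible (galConj σ ρ) := by
  refine ⟨h.1, fun W hW => ?_⟩
  let W' : Submodule K (Fin d → K) :=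
    { carrier := {y | (fun i => σ (y i)) ∈ W}
      add_mem' := by
        intro a b ha hb
        simp only [Set.mem_setOf_eq] at ha hb ⊢
        have hab : (fun i => σ ((a + b) i)) = (fun i => σ (a i)) + (fun i => σ (b i)) := by
          funext i; simp
        rw [hab]; exact W.add_mem ha hb
      zero_mem' := by
        simp only [Set.mem_setOf_eq]
        have h0 : (fun i => σ ((0 : Fin d → K) i)) = (0 : Fin d → K) := by funext i; simp
        rw [h0]; exact W.zero_mem
      smul_mem' := by
        intro c y hy
        simp only [Set.mem_setOf_eq] at hy ⊢
        have hc : (fun i => σ ((c • y) i)) = σ c • (fun i => σ (y i)) := by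
          funext i; simp [mul_comm]
        rw [hc]; exact W.smul_mem (σ c) hy }
  have hmem' : ∀ y : Fin d → K, y ∈ W' ↔ (fun i => σ (y i)) ∈ W := fun y => Iff.rfl
  have hkey : ∀ (M : Matrix (Fin d) (Fin d) K) (y : Fin d → K),
      (fun i => σ ((M.mulVec y) i)) = (M.map σ).mulVec (fun i => σ (y i)) := by
    intro M y
    funext i
    simp [Matrix.mulVec, dotProduct, map_sum, Matrix.map_apply]
  have hgal : ∀ g : G, ((galConj σ ρ g : (Matrix (Fin d) (Fin d) K)ˣ) : Matrix (Fin d) (Fin d) K)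
      = (ρ g : Matrix (Fin d) (Fin d) K).map σ := fun g => rfl
  have hW' : IsInvariant ρ W' := by
    intro g y hy
    rw [hmem'] at hy ⊢
    rw [hkey]
    have := hW g _ hy
    rwa [hgal] at this
  rcases h.2 _ hW' with hbot | htop
  · left
    rw [Submodule.eq_bot_iff] at hbot ⊢
    intro x hx
    have hx' : (fun i => σ.symm (x i)) ∈ W' := by
      rw [hmem']
      have : (fun i => σ (σ.symm (x i))) = x := by funext i; simp
      rwa [this]
    have h0 := hbot _ hx'
    funext i
    have := congrFun h0 i
    have hxi : x i = σ (σ.symm (x i)) := (σ.apply_symm_apply (x i)).symm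
    rw [hxi, this]
    simp
  · right
    rw [Submodule.eq_top_iff'] at htop ⊢
    intro x
    have hx' : (fun i => σ.symm (x i)) ∈ W' := htop _
    rw [hmem'] at hx'
    have : (fun i => σ (σ.symm (x i))) = x := by funext i; simp
    rwa [this] at hx'

theorem key_finrank [Fintype G] [IsAlgClosed K] (hG : (Fintype.card G : K) ≠ 0)
    {d : ℕ} (s : ℕ) (τ : Fin s → MatRep K G d)
    (hirr : ∀ i, IsIrreducible (τ i))
    (hnoniso : ∀ i j, i ≠ j → ¬ IsoRep (τ i) (τ j)) :
    Module.finrank K ↥(LinearMap.range (LinearMap.mulLeft K (∑ i, repIdem (τ i)))) = s * d ^ 2 := by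
  rcases isEmpty_or_nonempty (Fin s) with hs | hs
  · have hs0 : s = 0 := by
      rcases Nat.eq_zero_or_pos s with h0 | h0
      · exact h0
      · exact (hs.false (⟨0, h0⟩ : Fin s)).elim
    have he0 : (∑ i, repIdem (τ i)) = (0 : MonoidAlgebra K G) := by
      rw [Finset.univ_eq_empty, Finset.sum_empty]
    have hml : LinearMap.mulLeft K (0 : MonoidAlgebra K G) = 0 := by
      apply LinearMap.ext
      intro x
      rw [LinearMap.mulLeft_apply, zero_mul, LinearMap.zero_apply]
    rw [he0, hml, LinearMap.range_zero, finrank_bot, hs0, zero_mul]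
  · have hdK : (d : K) ≠ 0 := dK_ne_zero (hirr (Classical.arbitrary (Fin s))) hG
    set e : MonoidAlgebra K G := ∑ i, repIdem (τ i) with he
    have hcomp : ∀ i j : Fin s, fourier (τ j) (repIdem (τ i))
        = if i = j then (1 : Matrix (Fin d) (Fin d) K) else 0 := by
      intro i j
      rcases eq_or_ne i j with rfl | hij
      · rw [if_pos rfl]; exact fourier_repIdem_same (hirr i) hG
      · rw [if_neg hij]; exact fourier_repIdem_mix (hirr j) (hnoniso j i (Ne.symm hij))
    have hΦe : ∀ j, fourier (τ j) e = 1 := by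
      intro j
      rw [he, map_sum]
      rw [Finset.sum_congr rfl fun (i : Fin s) _ => hcomp i j]
      rw [Finset.sum_ite_eq' Finset.univ j (fun _ => (1 : Matrix (Fin d) (Fin d) K))]
      rw [if_pos (Finset.mem_univ j)]
    set Φ : MonoidAlgebra K G →ₗ[K] (Fin s → Matrix (Fin d) (Fin d) K) :=
      LinearMap.pi (fun i => (fourier (τ i)).toLinearMap) with hΦdef
    have hΦ : ∀ (x : MonoidAlgebra K G) (i : Fin s), Φ x i = fourier (τ i) x :=
      fun _ _ => rfl
    have hmulΦ : ∀ x, Φ (e * x) = Φ x := by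
      intro x
      funext i
      rw [hΦ, hΦ, _root_.map_mul, hΦe, one_mul]
    have hkill : ∀ x, Φ x = 0 → e * x = 0 := by
      intro x hx
      rw [he, Finset.sum_mul]
      apply Finset.sum_eq_zero
      intro i _
      apply repIdem_mul_eq_zero
      have hxi := congrFun hx i
      rw [hΦ] at hxi
      exact hxi
    have hsurj : Function.Surjective Φ := by
      have hrange : ∀ (i : Fin s) (a b : Fin d) (c : K),
          Pi.single i (Matrix.single a b c) ∈ LinearMap.range Φ := by
        intro i a b c
        have hκ0 : (Fintype.card G : K) * (d : K)⁻¹ ≠ 0 := mul_ne_zero hG (inv_ne_zero hdK)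
        refine ⟨(c * ((Fintype.card G : K) * (d : K)⁻¹)⁻¹) • fvec (τ i) a b, ?_⟩
        funext j
        have hsm : Φ ((c * ((Fintype.card G : K) * (d : K)⁻¹)⁻¹) • fvec (τ i) a b) j
            = (c * ((Fintype.card G : K) * (d : K)⁻¹)⁻¹) • fourier (τ j) (fvec (τ i) a b) := by
          rw [_root_.map_smul]
          rfl
        rw [hsm]
        rcases eq_or_ne i j with rfl | hij
        · rw [fourier_fvec_same (hirr i) hG, Pi.single_eq_same]
          rw [Matrix.smul_single, smul_eq_mul, mul_assoc, inv_mul_cancel₀ hκ0, mul_one]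
        · rw [fourier_fvec_mix (hirr j) (hnoniso j i (Ne.symm hij)), smul_zero,
            Pi.single_eq_of_ne (Ne.symm hij)]
      intro m
      have hm : m ∈ LinearMap.range Φ := by
        have hm1 : m = ∑ i : Fin s, Pi.single i (m i) := (Finset.univ_sum_single m).symm
        rw [hm1]
        apply Submodule.sum_mem
        intro i _
        have hm2 : (Pi.single i (m i) : Fin s → Matrix (Fin d) (Fin d) K)
            = ∑ a : Fin d, ∑ b : Fin d, Pi.single i (Matrix.single a b (m i a b)) := by
          rw [show (Pi.single i (m i) : Fin s → Matrix (Fin d) (Fin d) K)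
              = LinearMap.single K (fun _ => Matrix (Fin d) (Fin d) K) i (m i) from rfl]
          conv_lhs => rw [Matrix.matrix_eq_sum_single (m i)]
          rw [map_sum]
          exact Finset.sum_congr rfl fun a _ => by rw [map_sum]; rfl
        rw [hm2]
        exact Submodule.sum_mem _ fun a _ => Submodule.sum_mem _ fun b _ => hrange i a b _
      exact hm
    have hbij : Function.Bijective
        (Φ.comp (LinearMap.range (LinearMap.mulLeft K e)).subtype) := by
      constructor
      · intro x y hxy
        obtain ⟨u, hu⟩ := x.2
        obtain ⟨v, hv⟩ := y.2
        rw [LinearMap.mulLeft_apply] at hu hv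
        have hxy' : Φ (x : MonoidAlgebra K G) = Φ (y : MonoidAlgebra K G) := hxy
        have h0 : Φ ((x : MonoidAlgebra K G) - (y : MonoidAlgebra K G)) = 0 := by
          rw [map_sub, hxy', sub_self]
        have hx1 : (x : MonoidAlgebra K G) - (y : MonoidAlgebra K G) = e * (u - v) := by
          rw [mul_sub, hu, hv]
        have h2 : Φ (u - v) = 0 := by rw [← hmulΦ (u - v), ← hx1, h0]
        have h3 := hkill _ h2
        apply Subtype.ext
        have h4 : (x : MonoidAlgebra K G) - (y : MonoidAlgebra K G) = 0 := by rw [hx1, h3]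
        exact sub_eq_zero.1 h4
      · intro m
        obtain ⟨x, hx⟩ := hsurj m
        refine ⟨⟨e * x, ⟨x, rfl⟩⟩, ?_⟩
        show Φ (e * x) = m
        rw [hmulΦ x, hx]
    rw [LinearEquiv.finrank_eq (LinearEquiv.ofBijective _ hbij)]
    rw [Module.finrank_pi_fintype]
    rw [Finset.sum_congr rfl fun (i : Fin s) _ =>
      Module.finrank_matrix (Fin d) (Fin d) (R := K) (M := K)]
    simp [Fintype.card_fin, Finset.sum_const, pow_two, mul_assoc]

end Aux3

section Aux4

open Matrix

lemma rank_map_field {K L : Type*} [Field K] [Field L] (f : K →+* L)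
    {n : Type*} [Fintype n] [DecidableEq n] (M : Matrix n n K) :
    (M.map f).rank = M.rank := by
  classical
  obtain ⟨P, Q, D, hM⟩ := Matrix.Pivot.exists_list_transvec_mul_diagonal_mul_list_transvec M
  have hdetP : ((P.map Matrix.TransvectionStruct.toMatrix).prod).det = 1 :=
    Matrix.TransvectionStruct.det_toMatrix_prod P
  have hdetQ : ((Q.map Matrix.TransvectionStruct.toMatrix).prod).det = 1 :=
    Matrix.TransvectionStruct.det_toMatrix_prod Q
  have hdetPf : (((P.map Matrix.TransvectionStruct.toMatrix).prod).map f).det = 1 := by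
    show (f.mapMatrix ((P.map Matrix.TransvectionStruct.toMatrix).prod)).det = 1
    rw [← RingHom.map_det, hdetP, _root_.map_one]
  have hdetQf : (((Q.map Matrix.TransvectionStruct.toMatrix).prod).map f).det = 1 := by
    show (f.mapMatrix ((Q.map Matrix.TransvectionStruct.toMatrix).prod)).det = 1
    rw [← RingHom.map_det, hdetQ, _root_.map_one]
  subst hM
  rw [Matrix.map_mul, Matrix.map_mul]
  rw [Matrix.rank_mul_eq_left_of_isUnit_det _ _ (by rw [hdetQf]; exact isUnit_one)]
  rw [Matrix.rank_mul_eq_right_of_isUnit_det _ _ (by rw [hdetPf]; exact isUnit_one)]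
  rw [Matrix.rank_mul_eq_left_of_isUnit_det _ _ (by rw [hdetQ]; exact isUnit_one)]
  rw [Matrix.rank_mul_eq_right_of_isUnit_det _ _ (by rw [hdetP]; exact isUnit_one)]
  rw [Matrix.diagonal_map (map_zero f), Matrix.rank_diagonal, Matrix.rank_diagonal]
  apply Fintype.card_congr
  apply Equiv.subtypeEquivRight
  intro i
  show f (D i) ≠ 0 ↔ D i ≠ 0
  rw [not_iff_not]
  exact ⟨fun h => (map_eq_zero_iff f f.injective).1 h, fun h => by rw [h, map_zero]⟩

end Aux4

/-- The two-sided ideal of `F_q[G]` generated by the descended idempotent `e[ρ]` of a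
Galois orbit of size `s` of a `d`-dimensional irreducible representation has
`F_q`-dimension `s·d²`. -/
theorem dim_of_orbit_code (Fq : Type*) [Field Fq] [Fintype Fq] (G : Type*) [Group G]
    [Fintype G] (hco : Nat.Coprime (Fintype.card G) (Fintype.card Fq))
    {d : ℕ} (ρ : MatRep (AlgebraicClosure Fq) G d) (hirr : IsIrreducible ρ)
    (s : ℕ) (τ : Fin s → MatRep (AlgebraicClosure Fq) G d) (henum : OrbitEnum Fq ρ s τ)
    (e₀ : MonoidAlgebra Fq G)
    (heq : ∀ g : G, algebraMap Fq (AlgebraicClosure Fq) (e₀.coeff g) = (∑ i, repIdem (τ i)).coeff g) :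
    Module.finrank Fq ↥(codeSub (TwoSidedIdeal.span {e₀})) = s * d ^ 2 := by
  classical
  have hirrs : ∀ i, IsIrreducible (τ i) := by
    intro i
    obtain ⟨σ, hiso⟩ := henum.1 i
    exact irreducible_of_iso hiso (irreducible_galConj σ hirr)
  have hninj : ∀ i j : Fin s, i ≠ j → ¬ IsoRep (τ i) (τ j) := henum.2.1
  have hGF : (Fintype.card G : Fq) ≠ 0 := by
    obtain ⟨p, hp⟩ := CharP.exists Fq
    haveI := hp
    obtain ⟨n, hprime, hcard⟩ := FiniteField.card Fq p
    intro h0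
    have hdvd : p ∣ Fintype.card G := (CharP.cast_eq_zero_iff Fq p _).1 h0
    have hdvd2 : p ∣ Fintype.card Fq := by
      rw [hcard]; exact dvd_pow_self p n.pos.ne'
    have hone : p ∣ 1 := by
      have hg := Nat.dvd_gcd hdvd hdvd2
      rwa [hco] at hg
    exact hprime.ne_one (Nat.dvd_one.1 hone)
  have hGK : (Fintype.card G : AlgebraicClosure Fq) ≠ 0 := by
    have hmap : algebraMap Fq (AlgebraicClosure Fq) (Fintype.card G : Fq)
        = (Fintype.card G : AlgebraicClosure Fq) := map_natCast _ _
    intro h0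
    apply hGF
    apply (algebraMap Fq (AlgebraicClosure Fq)).injective
    rw [hmap, h0, map_zero]
  -- e₀ is a class function
  have hclass : ∀ a b : G, e₀.coeff (a * b) = e₀.coeff (b * a) := by
    intro a b
    have h3 : (∑ i, repIdem (τ i)).coeff (a * b) = (∑ i, repIdem (τ i)).coeff (b * a) := by
      simp only [MonoidAlgebra.coeff_sum, Finsupp.finset_sum_apply]
      exact Finset.sum_congr rfl fun i _ => repIdem_conj (τ i) a b
    apply (algebraMap Fq (AlgebraicClosure Fq)).injective
    rw [heq (a * b), heq (b * a), h3]
  -- e₀ is central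
  have hcentral : ∀ x : MonoidAlgebra Fq G, e₀ * x = x * e₀ := by
    intro x
    apply MonoidAlgebra.ext
    apply Finsupp.ext
    intro g
    rw [mul_apply_fin, mul_apply_fin]
    refine Fintype.sum_equiv ((Equiv.inv G).trans (Equiv.mulRight g)) _ _ fun h => ?_
    simp only [Equiv.trans_apply, Equiv.inv_apply, Equiv.coe_mulRight]
    have hcl : e₀.coeff ((h⁻¹ * g)⁻¹ * g) = e₀.coeff h := by
      rw [hclass]
      congr 1
      group
    rw [hcl, mul_comm]
  -- the span of e₀ is e₀ · Fq[G]
  have hspan : ∀ x : MonoidAlgebra Fq G,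
      x ∈ TwoSidedIdeal.span {e₀} ↔ ∃ y, e₀ * y = x := by
    intro x
    constructor
    · intro hx
      have hx2 := TwoSidedIdeal.mem_span_iff.1 hx
        (TwoSidedIdeal.mk' {z | ∃ y, e₀ * y = z}
          ⟨0, mul_zero e₀⟩
          (fun {u v} hu hv => by
            obtain ⟨yu, hu⟩ := hu
            obtain ⟨yv, hv⟩ := hv
            exact ⟨yu + yv, by rw [mul_add, hu, hv]⟩)
          (fun {u} hu => by
            obtain ⟨y, hy⟩ := hu
            exact ⟨-y, by rw [mul_neg, hy]⟩)
          (fun {u v} hv => by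
            obtain ⟨y, hy⟩ := hv
            refine ⟨u * y, ?_⟩
            rw [← hy, ← mul_assoc, ← mul_assoc, hcentral u])
          (fun {u v} hu => by
            obtain ⟨y, hy⟩ := hu
            exact ⟨y * v, by rw [← hy, mul_assoc]⟩))
        (by
          intro z hz
          rw [Set.mem_singleton_iff] at hz
          rw [SetLike.mem_coe, TwoSidedIdeal.mem_mk', hz]
          exact ⟨1, mul_one e₀⟩)
      rwa [TwoSidedIdeal.mem_mk'] at hx2
    · rintro ⟨y, rfl⟩
      exact TwoSidedIdeal.mul_mem_right _ _ _
        (TwoSidedIdeal.subset_span (Set.mem_singleton e₀))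
  have hcode : codeSub (TwoSidedIdeal.span {e₀})
      = LinearMap.range (LinearMap.mulLeft Fq e₀) := by
    ext x
    rw [LinearMap.mem_range]
    constructor
    · intro hx
      exact (hspan x).1 hx
    · rintro ⟨y, hy⟩
      exact (hspan x).2 ⟨y, hy⟩
  rw [hcode]
  let b : Module.Basis G Fq (MonoidAlgebra Fq G) := MonoidAlgebra.basis G Fq
  let bK : Module.Basis G (AlgebraicClosure Fq) (MonoidAlgebra (AlgebraicClosure Fq) G) :=
    MonoidAlgebra.basis G (AlgebraicClosure Fq)
  have hr₀ : Module.finrank Fq ↥(LinearMap.range (LinearMap.mulLeft Fq e₀))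
      = (LinearMap.toMatrix b b (LinearMap.mulLeft Fq e₀)).rank := by
    rw [Matrix.rank_eq_finrank_range_toLin _ b b, Matrix.toLin_toMatrix]
  have hrK : Module.finrank (AlgebraicClosure Fq)
      ↥(LinearMap.range (LinearMap.mulLeft (AlgebraicClosure Fq) (∑ i, repIdem (τ i))))
      = (LinearMap.toMatrix bK bK
          (LinearMap.mulLeft (AlgebraicClosure Fq) (∑ i, repIdem (τ i)))).rank := by
    rw [Matrix.rank_eq_finrank_range_toLin _ bK bK, Matrix.toLin_toMatrix]
  have hMmap : LinearMap.toMatrix bK bK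
        (LinearMap.mulLeft (AlgebraicClosure Fq) (∑ i, repIdem (τ i)))
      = (LinearMap.toMatrix b b (LinearMap.mulLeft Fq e₀)).map
          (algebraMap Fq (AlgebraicClosure Fq)) := by
    ext g h
    rw [Matrix.map_apply]
    have h1 : LinearMap.toMatrix b b (LinearMap.mulLeft Fq e₀) g h = e₀.coeff (g * h⁻¹) := by
      rw [LinearMap.toMatrix_apply]
      have hb : b h = MonoidAlgebra.single h (1 : Fq) :=
        MonoidAlgebra.basis_apply _ h
      rw [hb, LinearMap.mulLeft_apply]
      show (e₀ * MonoidAlgebra.single h (1 : Fq)).coeff g = _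
      rw [MonoidAlgebra.coeff_mul_single_apply, mul_one]
    have h2 : LinearMap.toMatrix bK bK
          (LinearMap.mulLeft (AlgebraicClosure Fq) (∑ i, repIdem (τ i))) g h
        = (∑ i, repIdem (τ i)).coeff (g * h⁻¹) := by
      rw [LinearMap.toMatrix_apply]
      have hb : bK h = MonoidAlgebra.single h (1 : AlgebraicClosure Fq) :=
        MonoidAlgebra.basis_apply _ h
      rw [hb, LinearMap.mulLeft_apply]
      show ((∑ i, repIdem (τ i)) * MonoidAlgebra.single h (1 : AlgebraicClosure Fq)).coeff g = _
      rw [MonoidAlgebra.coeff_mul_single_apply, mul_one]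
    rw [h1, h2, ← heq (g * h⁻¹)]
  rw [hr₀, ← rank_map_field (algebraMap Fq (AlgebraicClosure Fq)) _, ← hMmap, ← hrK]
  exact key_finrank hGK s τ hirrs hninj


end GroupCodeHulls
end

section
/- Let F_q be a finite field and G a finite group with gcd(|G|, q) = 1. There exists a group code C ⊆ F_q[G] with one-dimensional hull (dim_{F_q}(C ∩ C^⊥) = 1) if and only if gcd(exp(G^{ab}), q − 1) ≥ 3, where G^{ab} is the abelianization of G and exp denotes the exponent. -/
open scoped BigOperators

namespace GroupCodeHulls

variable {K : Type*} [Field K] {G : Type*} [Group G]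

/-! ### Auxiliary lemmas -/

section Aux

variable [Fintype G]

lemma mem_codeSub {C : TwoSidedIdeal (MonoidAlgebra K G)} {x : MonoidAlgebra K G} :
    x ∈ codeSub C ↔ x ∈ C := Iff.rfl

lemma mem_dualSub {C : TwoSidedIdeal (MonoidAlgebra K G)} {x : MonoidAlgebra K G} :
    x ∈ dualSub C ↔ ∀ u ∈ C, eform x u = 0 := Iff.rfl

lemma eform_smul_smul (c d : K) (a b : MonoidAlgebra K G) :
    eform (c • a) (d • b) = (c * d) * eform a b := by
  unfold eform
  rw [Finset.mul_sum]
  refine Finset.sum_congr rfl fun g _ => ?_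
  rw [MonoidAlgebra.coeff_smul_apply, MonoidAlgebra.coeff_smul_apply, smul_eq_mul, smul_eq_mul]
  ring

lemma eform_single_mul (h : G) (r : K) (v u : MonoidAlgebra K G) :
    eform (MonoidAlgebra.single h r * v) u = eform v (MonoidAlgebra.single h⁻¹ r * u) := by
  unfold eform
  simp only [MonoidAlgebra.single_mul_apply, inv_inv]
  exact (Fintype.sum_equiv (Equiv.mulLeft h)
    (fun y => v.coeff y * (r * u.coeff (h * y))) (fun x => r * v.coeff (h⁻¹ * x) * u.coeff x)
    (fun y => by
      show v.coeff y * (r * u.coeff (h * y)) = r * v.coeff (h⁻¹ * (h * y)) * u.coeff (h * y)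
      rw [inv_mul_cancel_left]; ring)).symm

/-- The vector `∑ χ(g⁻¹)·g` attached to a linear character. -/
noncomputable def chVec (χ : G →* K) : MonoidAlgebra K G :=
  ∑ g : G, MonoidAlgebra.single g (χ g⁻¹)

lemma chVec_apply (χ : G →* K) (x : G) : (chVec χ).coeff x = χ x⁻¹ := by
  classical
  rw [chVec, MonoidAlgebra.coeff_sum, Finset.sum_apply']
  simp [MonoidAlgebra.coeff_single, Finsupp.single_apply]

lemma chVec_ne_zero (χ : G →* K) : chVec χ ≠ 0 := by
  intro h
  have h1 : (chVec χ).coeff 1 = χ 1⁻¹ := chVec_apply χ 1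
  rw [h] at h1
  simp at h1

lemma single_mul_chVec (χ : G →* K) (h : G) (r : K) :
    MonoidAlgebra.single h r * chVec χ = (r * χ h) • chVec χ := by
  ext x
  rw [MonoidAlgebra.single_mul_apply, MonoidAlgebra.coeff_smul_apply, smul_eq_mul,
    chVec_apply, chVec_apply, mul_inv_rev, inv_inv, map_mul]
  ring

lemma chVec_mul_single (χ : G →* K) (h : G) (r : K) :
    chVec χ * MonoidAlgebra.single h r = (χ h * r) • chVec χ := by
  ext x
  rw [MonoidAlgebra.mul_single_apply, MonoidAlgebra.coeff_smul_apply, smul_eq_mul,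
    chVec_apply, chVec_apply, mul_inv_rev, inv_inv, map_mul]
  ring

lemma mul_chVec (χ : G →* K) (y : MonoidAlgebra K G) :
    y * chVec χ = (∑ h ∈ y.coeff.support, y.coeff h * χ h) • chVec χ := by
  conv_lhs => rw [← MonoidAlgebra.sum_coeff_single y]
  rw [Finsupp.sum, Finset.sum_mul, Finset.sum_smul]
  exact Finset.sum_congr rfl fun h _ => single_mul_chVec χ h (y.coeff h)

lemma chVec_mul (χ : G →* K) (y : MonoidAlgebra K G) :
    chVec χ * y = (∑ h ∈ y.coeff.support, χ h * y.coeff h) • chVec χ := by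
  conv_lhs => rw [← MonoidAlgebra.sum_coeff_single y]
  rw [Finsupp.sum, Finset.mul_sum, Finset.sum_smul]
  exact Finset.sum_congr rfl fun h _ => chVec_mul_single χ h (y.coeff h)

lemma eform_chVec_self (χ : G →* K) (hχ : χ * χ ≠ 1) :
    eform (chVec χ) (chVec χ) = 0 := by
  unfold eform
  simp only [chVec_apply]
  have h0 : ∑ g : G, (χ * χ) g = 0 := sum_hom_units_eq_zero (χ * χ) hχ
  calc ∑ x : G, χ x⁻¹ * χ x⁻¹ = ∑ x : G, (χ * χ) x⁻¹ := by
        refine Finset.sum_congr rfl fun x _ => ?_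
        rw [MonoidHom.mul_apply]
    _ = ∑ x : G, (χ * χ) x :=
        Fintype.sum_equiv (Equiv.inv G) _ _ (fun x => rfl)
    _ = 0 := h0

/-- The group code attached to a linear character: the span of `chVec χ`. -/
noncomputable def chCode (χ : G →* K) : TwoSidedIdeal (MonoidAlgebra K G) :=
  TwoSidedIdeal.mk' {x | ∃ c : K, x = c • chVec χ}
    ⟨0, (zero_smul K _).symm⟩
    (by
      rintro x y ⟨c, rfl⟩ ⟨d, rfl⟩
      exact ⟨c + d, by rw [add_smul]⟩)
    (by
      rintro x ⟨c, rfl⟩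
      exact ⟨-c, by rw [neg_smul]⟩)
    (by
      rintro x y ⟨c, rfl⟩
      exact ⟨c * (∑ h ∈ x.coeff.support, x.coeff h * χ h), by
        rw [mul_smul_comm, mul_chVec, smul_smul, mul_comm c]⟩)
    (by
      rintro x y ⟨c, rfl⟩
      exact ⟨c * (∑ h ∈ y.coeff.support, χ h * y.coeff h), by
        rw [smul_mul_assoc, chVec_mul, smul_smul]⟩)

lemma mem_chCode (χ : G →* K) (x : MonoidAlgebra K G) :
    x ∈ chCode χ ↔ ∃ c : K, x = c • chVec χ := by
  simp [chCode, TwoSidedIdeal.mem_mk']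

lemma codeSub_chCode (χ : G →* K) :
    codeSub (chCode χ) = Submodule.span K {chVec χ} := by
  ext x
  rw [mem_codeSub, mem_chCode, Submodule.mem_span_singleton]
  exact ⟨fun ⟨c, hc⟩ => ⟨c, hc.symm⟩, fun ⟨c, hc⟩ => ⟨c, hc.symm⟩⟩

lemma hullDim_chCode (χ : G →* K) (hχ : χ * χ ≠ 1) : hullDim (chCode χ) = 1 := by
  have hle : codeSub (chCode χ) ≤ dualSub (chCode χ) := by
    intro x hx
    rw [mem_codeSub, mem_chCode] at hx
    obtain ⟨c, rfl⟩ := hx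
    rw [mem_dualSub]
    intro u hu
    rw [mem_chCode] at hu
    obtain ⟨d, rfl⟩ := hu
    rw [eform_smul_smul, eform_chVec_self χ hχ, mul_zero]
  have hhull : hullSub (chCode χ) = codeSub (chCode χ) := by
    rw [hullSub, inf_eq_left]
    exact hle
  rw [hullDim, hhull, codeSub_chCode]
  exact finrank_span_singleton (chVec_ne_zero χ)

/-- Given a linear character whose square is nontrivial, there is a group code
with one-dimensional hull. -/
lemma exists_code_of_char (χu : G →* Kˣ) (g : G) (hg : (χu g) ^ 2 ≠ 1) :
    ∃ C : TwoSidedIdeal (MonoidAlgebra K G), hullDim C = 1 := by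
  set χ : G →* K := (Units.coeHom K).comp χu with hχdef
  have hχ : χ * χ ≠ 1 := by
    intro h
    apply hg
    ext
    have h2 := DFunLike.congr_fun h g
    simp only [MonoidHom.mul_apply, MonoidHom.one_apply, hχdef, MonoidHom.comp_apply,
      Units.coeHom_apply] at h2
    rw [Units.val_pow_eq_pow_val, Units.val_one, pow_two]
    exact h2
  exact ⟨chCode χ, hullDim_chCode χ hχ⟩

/-- From a group code with one-dimensional hull we obtain a linear character
whose square is nontrivial. -/
lemma exists_char_of_hullDim_one (hcard : (Fintype.card G : K) ≠ 0)
    (C : TwoSidedIdeal (MonoidAlgebra K G)) (hC : hullDim C = 1) :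
    ∃ χ : G →* Kˣ, ∃ g : G, (χ g) ^ 2 ≠ 1 := by
  classical
  haveI : Module.Free K ↥(hullSub C) := Module.Free.of_divisionRing K ↥(hullSub C)
  obtain ⟨v₀, hv₀, hspan⟩ := finrank_eq_one_iff'.mp hC
  set v : MonoidAlgebra K G := (v₀ : MonoidAlgebra K G) with hvdef
  have hv : v ≠ 0 := fun h => hv₀ (Subtype.ext h)
  have hvC : v ∈ C := mem_codeSub.mp (Submodule.mem_inf.mp v₀.2).1
  have hvD : ∀ u ∈ C, eform v u = 0 := mem_dualSub.mp (Submodule.mem_inf.mp v₀.2).2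
  have hmem : ∀ g : G, MonoidAlgebra.single g (1 : K) * v ∈ hullSub C := by
    intro g
    refine Submodule.mem_inf.mpr ⟨mem_codeSub.mpr (C.mul_mem_left _ _ hvC), ?_⟩
    rw [mem_dualSub]
    intro u hu
    rw [eform_single_mul]
    exact hvD _ (C.mul_mem_left _ _ hu)
  have hex : ∀ g : G, ∃ c : K, c • v = MonoidAlgebra.single g (1 : K) * v := by
    intro g
    obtain ⟨c, hc⟩ := hspan ⟨MonoidAlgebra.single g (1 : K) * v, hmem g⟩
    exact ⟨c, congrArg Subtype.val hc⟩
  have huniq : ∀ c d : K, c • v = d • v → c = d := by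
    intro c d h
    have h2 : (c - d) • v = 0 := by rw [sub_smul, h, sub_self]
    rcases smul_eq_zero.mp h2 with h3 | h3
    · exact sub_eq_zero.mp h3
    · exact absurd h3 hv
  choose χf hχf using hex
  have hone : χf 1 = 1 := by
    apply huniq
    rw [hχf, one_smul, ← MonoidAlgebra.one_def, one_mul]
  have hmul : ∀ g h : G, χf (g * h) = χf g * χf h := by
    intro g h
    apply huniq
    rw [hχf]
    have : MonoidAlgebra.single (g * h) (1 : K) =
        MonoidAlgebra.single g (1 : K) * MonoidAlgebra.single h (1 : K) := by
      rw [MonoidAlgebra.single_mul_single, one_mul]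
    rw [this, mul_assoc, ← hχf h, mul_smul_comm, ← hχf g, smul_smul, mul_comm (χf h)]
  have hne0 : ∀ g : G, χf g ≠ 0 := by
    intro g h0
    apply hv
    have h1 : MonoidAlgebra.single g (1 : K) * v = 0 := by
      rw [← hχf g, h0, zero_smul]
    calc v = MonoidAlgebra.single g⁻¹ (1 : K) * (MonoidAlgebra.single g (1 : K) * v) := by
          rw [← mul_assoc, MonoidAlgebra.single_mul_single, inv_mul_cancel, one_mul,
            ← MonoidAlgebra.one_def, one_mul]
      _ = 0 := by rw [h1, mul_zero]
  have hval : ∀ g : G, χf g * v.coeff g = v.coeff 1 := by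
    intro g
    have h1 := congrArg (fun w : MonoidAlgebra K G => w.coeff g) (hχf g)
    simpa [MonoidAlgebra.single_mul_apply] using h1
  have hv1 : v.coeff 1 ≠ 0 := by
    intro h1
    apply hv
    ext g
    have h2 := hval g
    rw [h1] at h2
    rcases mul_eq_zero.mp h2 with h3 | h3
    · exact absurd h3 (hne0 g)
    · simpa using h3
  set χm : G →* K :=
    { toFun := χf
      map_one' := hone
      map_mul' := hmul } with hχm
  by_contra hall
  push_neg at hall
  have h2 : ∀ g : G, χf g ^ 2 = 1 := by
    intro g
    have := hall χm.toHomUnits g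
    have h3 := congrArg (Units.val) this
    rw [Units.val_pow_eq_pow_val, Units.val_one, MonoidHom.coe_toHomUnits] at h3
    exact h3
  have hterm : ∀ g : G, v.coeff g * v.coeff g = v.coeff 1 * v.coeff 1 := by
    intro g
    calc v.coeff g * v.coeff g = χf g ^ 2 * (v.coeff g * v.coeff g) := by rw [h2 g, one_mul]
      _ = (χf g * v.coeff g) * (χf g * v.coeff g) := by ring
      _ = v.coeff 1 * v.coeff 1 := by rw [hval g]
  have hzero : eform v v = 0 := hvD v hvC
  rw [eform] at hzero
  rw [Finset.sum_congr rfl (fun g _ => hterm g), Finset.sum_const, Finset.card_univ,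
    nsmul_eq_mul] at hzero
  rcases mul_eq_zero.mp hzero with h3 | h3
  · exact hcard h3
  · exact hv1 (mul_self_eq_zero.mp h3)

end Aux

/-- There is a group code in `F_q[G]` with one-dimensional hull iff
`gcd(exp(G^{ab}), q-1) ≥ 3`. -/
theorem exists_code_one_dim_hull_iff (Fq : Type*) [Field Fq] [Fintype Fq] (G : Type*)
    [Group G] [Fintype G] (hco : Nat.Coprime (Fintype.card G) (Fintype.card Fq)) :
    (∃ C : TwoSidedIdeal (MonoidAlgebra Fq G), hullDim C = 1) ↔
      3 ≤ Nat.gcd (Monoid.exponent (Abelianization G)) (Fintype.card Fq - 1) := by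
  classical
  have hq1 : 1 < Fintype.card Fq := Fintype.one_lt_card
  set N : ℕ := Fintype.card Fq - 1 with hN
  have hNpos : 0 < N := by omega
  have hcardU : Nat.card Fqˣ = N := by rw [Nat.card_units, Nat.card_eq_fintype_card]
  set e : ℕ := Monoid.exponent (Abelianization G) with he
  have hcard : (Fintype.card G : Fq) ≠ 0 := by
    intro h0
    set p : ℕ := ringChar Fq with hp
    haveI : CharP Fq p := ringChar.charP Fq
    have hpp : p.Prime := CharP.char_is_prime Fq p
    have h1 : p ∣ Fintype.card G := (CharP.cast_eq_zero_iff Fq p _).mp h0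
    have h2 : p ∣ Fintype.card Fq := by
      obtain ⟨n, hn⟩ := FiniteField.card Fq p
      rw [hn.2]
      exact dvd_pow_self p n.ne_zero
    have h3 : p ∣ 1 := hco ▸ Nat.dvd_gcd h1 h2
    exact hpp.one_lt.ne' (Nat.dvd_one.mp h3)
  constructor
  · rintro ⟨C, hC⟩
    obtain ⟨χ, g, hg⟩ := exists_char_of_hullDim_one hcard C hC
    set u : Fqˣ := χ g with hu
    have h1 : orderOf u ∣ e := by
      apply orderOf_dvd_of_pow_eq_one
      have h2 : u ^ e = (Abelianization.lift χ) ((Abelianization.of g) ^ e) := by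
        rw [map_pow, Abelianization.lift_apply_of]
      rw [h2, Monoid.pow_exponent_eq_one, map_one]
    have h2 : orderOf u ∣ N := hcardU ▸ orderOf_dvd_natCard u
    have h3 : orderOf u ∣ Nat.gcd e N := Nat.dvd_gcd h1 h2
    have h4 : ¬ orderOf u ∣ 2 := fun hd => hg (orderOf_dvd_iff_pow_eq_one.mp hd)
    have h5 : 0 < Nat.gcd e N := Nat.gcd_pos_of_pos_right _ hNpos
    have h6 := Nat.le_of_dvd h5 h3
    have h7 : orderOf u ≠ 1 := fun h => h4 (by rw [h]; exact one_dvd 2)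
    have h8 : orderOf u ≠ 2 := fun h => h4 (by rw [h])
    have h9 : orderOf u ≠ 0 := (orderOf_pos u).ne'
    omega
  · intro hgcd
    set m : ℕ := Nat.gcd e N with hm
    have heA : e ≠ 0 := Monoid.exponent_ne_zero_of_finite
    have hme : m ∣ e := Nat.gcd_dvd_left _ _
    have hmN : m ∣ N := Nat.gcd_dvd_right _ _
    obtain ⟨a, ha⟩ := Monoid.exists_orderOf_eq_exponent
      (G := Abelianization G) Monoid.ExponentExists.of_finite
    rw [← he] at ha
    set S : Subgroup (Abelianization G) :=
      (powMonoidHom m : Abelianization G →* Abelianization G).range with hS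
    set Q := Abelianization G ⧸ S with hQ
    set π : Abelianization G →* Q := QuotientGroup.mk' S with hπ
    have hQexp : Monoid.exponent Q ∣ m := by
      apply Monoid.exponent_dvd_of_forall_pow_eq_one
      intro x
      obtain ⟨y, rfl⟩ := QuotientGroup.mk'_surjective S x
      rw [← map_pow]
      rw [QuotientGroup.mk'_apply, QuotientGroup.eq_one_iff]
      exact ⟨y, rfl⟩
    have hQN : Monoid.exponent Q ∣ N := hQexp.trans hmN
    haveI : HasEnoughRootsOfUnity Fq (Monoid.exponent Q) := by
      constructor
      · obtain ⟨g₀, hg₀⟩ := IsCyclic.exists_generator (α := Fqˣ)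
        have hOrd : orderOf g₀ = N := by
          rw [orderOf_eq_card_of_forall_mem_zpowers hg₀, hcardU]
        have hk0 : Monoid.exponent Q ≠ 0 := Monoid.exponent_ne_zero_of_finite
        have hkN : Monoid.exponent Q ∣ orderOf g₀ := hOrd ▸ hQN
        refine ⟨((g₀ ^ (orderOf g₀ / Monoid.exponent Q) : Fqˣ) : Fq), ?_⟩
        have hord2 : orderOf (g₀ ^ (orderOf g₀ / Monoid.exponent Q)) = Monoid.exponent Q :=
          orderOf_pow_orderOf_div (by rw [hOrd]; omega) hkN
        have hpr := IsPrimitiveRoot.coe_units_iff.mpr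
          (IsPrimitiveRoot.orderOf (g₀ ^ (orderOf g₀ / Monoid.exponent Q)))
        rwa [hord2] at hpr
      · exact Subgroup.isCyclic _
    have hb2 : (π a) ^ 2 ≠ 1 := by
      intro h12
      rw [← map_pow, hπ, QuotientGroup.mk'_apply, QuotientGroup.eq_one_iff] at h12
      obtain ⟨c, hc⟩ := h12
      have hc' : c ^ m = a ^ 2 := hc
      have h1 : (a ^ 2) ^ (e / m) = 1 := by
        rw [← hc', ← pow_mul, Nat.mul_div_cancel' hme, Monoid.pow_exponent_eq_one]
      have h2 : e ∣ 2 * (e / m) := by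
        rw [← ha]
        apply orderOf_dvd_of_pow_eq_one
        rw [pow_mul, ha]
        exact h1
      have hdm : 0 < e / m := Nat.div_pos (Nat.le_of_dvd (Nat.pos_of_ne_zero heA) hme)
        (by omega)
      have h3 : m * (e / m) ∣ 2 * (e / m) := by
        rw [Nat.mul_div_cancel' hme]
        exact h2
      have hm2 : m ∣ 2 := (Nat.mul_dvd_mul_iff_right hdm).mp h3
      have := Nat.le_of_dvd (by norm_num) hm2
      omega
    obtain ⟨φ, hφ⟩ := CommGroup.exists_apply_ne_one_of_hasEnoughRootsOfUnity Q Fq hb2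
    obtain ⟨g, hga⟩ : ∃ g : G, Abelianization.of g = a := by
      exact QuotientGroup.mk'_surjective _ a
    refine exists_code_of_char (φ.comp (π.comp Abelianization.of)) g ?_
    rw [MonoidHom.comp_apply, MonoidHom.comp_apply, hga, ← map_pow]
    exact hφ

end GroupCodeHulls
end
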